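/- Let N ≥ 4 be an integer divisible by 4. For every integer s with 1 ≤ s ≤ N/4, one has 1/2 − ∑_{k=1}^{N/4−1} (4k/N − 1) cos(2πk(2s−1)/N) = 1/(N sin²((2s−1)π/N)). -/

import Mathlib

open Real Finset

lemma dir_sum' (θ : ℝ) : ∀ n : ℕ, 2 * Real.sin θ * ∑ k ∈ Finset.Icc 1 n, Real.cos (2*k*θ)
    = Real.sin ((2*n+1)*θ) - Real.sin θ := by
  intro n
  induction n with
  | zero => simp
  | succ n ih =>
    rw [Finset.sum_Icc_succ_top (by omega), mul_add, ih]
    push_cast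
    have e1 : (2*((n:ℝ)+1)+1)*θ = (((2*n+1)*θ + θ) + θ) := by ring
    have e2 : (2*((n:ℝ)+1))*θ = ((2*n+1)*θ + θ) := by ring
    rw [e1, e2, Real.sin_add, Real.sin_add, Real.cos_add]
    linear_combination (- Real.sin ((2*(n:ℝ)+1)*θ)) * Real.sin_sq_add_cos_sq θ

lemma fej_sum' (θ : ℝ) : ∀ n : ℕ, 2 * Real.sin θ^2 * ∑ k ∈ Finset.Icc 1 n, (((n:ℝ)+1) - k) * Real.cos (2*k*θ)
    = Real.sin (((n:ℝ)+1)*θ)^2 - ((n:ℝ)+1) * Real.sin θ^2 := by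
  intro n
  induction n with
  | zero => simp
  | succ n ih =>
    have split : ∑ k ∈ Finset.Icc 1 (n+1), (((n:ℝ)+1+1) - k) * Real.cos (2*k*θ)
        = (∑ k ∈ Finset.Icc 1 n, (((n:ℝ)+1) - k) * Real.cos (2*k*θ))
          + ∑ k ∈ Finset.Icc 1 (n+1), Real.cos (2*k*θ) := by
      have h1 : ∀ k ∈ Finset.Icc 1 (n+1), (((n:ℝ)+1+1) - k) * Real.cos (2*k*θ)
          = (((n:ℝ)+1) - k) * Real.cos (2*k*θ) + Real.cos (2*k*θ) := by
        intro k hk; ring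
      rw [Finset.sum_congr rfl h1, Finset.sum_add_distrib]
      congr 1
      rw [Finset.sum_Icc_succ_top (by omega : 1 ≤ n+1)]
      have h0 : (((n:ℝ)+1) - ((n+1:ℕ):ℝ)) * Real.cos (2*((n+1:ℕ):ℝ)*θ) = 0 := by
        push_cast; ring
      rw [h0, add_zero]
    push_cast
    rw [split, mul_add, ih]
    have hd := dir_sum' θ (n+1)
    push_cast at hd
    have key : 2 * Real.sin θ^2 * ∑ k ∈ Finset.Icc 1 (n+1), Real.cos (2*k*θ)
        = Real.sin θ * (Real.sin ((2*((n:ℝ)+1)+1)*θ) - Real.sin θ) := by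
      rw [← hd]; ring
    rw [key]
    have e1 : ((n:ℝ)+1+1)*θ = ((n:ℝ)+1)*θ + θ := by ring
    have e2 : (2*((n:ℝ)+1)+1)*θ = ((n:ℝ)+1)*θ + (((n:ℝ)+1)*θ + θ) := by ring
    rw [e1, e2, Real.sin_add, Real.sin_add, Real.cos_add]
    nlinarith [Real.sin_sq_add_cos_sq θ, Real.sin_sq_add_cos_sq (((n:ℝ)+1)*θ)]

theorem sum_identity_odd_inverse (N : ℕ) (hN4 : 4 ∣ N) (hN : 4 ≤ N)
    (s : ℕ) (hs1 : 1 ≤ s) (hs2 : s ≤ N / 4) :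
    (1 / 2 : ℝ) - ∑ k ∈ Finset.Icc 1 (N / 4 - 1),
        (4 * (k : ℝ) / N - 1) * Real.cos (2 * Real.pi * k * (2 * (s : ℝ) - 1) / N)
      = 1 / ((N : ℝ) * Real.sin ((2 * (s : ℝ) - 1) * Real.pi / N) ^ 2) := by
  obtain ⟨M, hM⟩ := hN4
  have hM1 : 1 ≤ M := by omega
  have hdiv : N / 4 = M := by omega
  have hNR : (N:ℝ) = 4 * M := by exact_mod_cast congrArg (Nat.cast : ℕ → ℝ) hM
  have hMR : (1:ℝ) ≤ M := by exact_mod_cast hM1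
  have hNpos : (0:ℝ) < N := by positivity
  have hsR : (1:ℝ) ≤ s := by exact_mod_cast hs1
  have hs2R : (s:ℝ) ≤ M := by rw [← hdiv]; exact_mod_cast hs2
  set θ : ℝ := (2 * (s : ℝ) - 1) * Real.pi / N with hθ
  -- sin θ > 0
  have hθpos : 0 < θ := by
    apply div_pos
    · have : (0:ℝ) < 2 * (s:ℝ) - 1 := by linarith
      positivity
    · exact hNpos
  have hθlt : θ < Real.pi := by
    rw [hθ, div_lt_iff₀ hNpos]
    have h1 : 2 * (s:ℝ) - 1 < N := by rw [hNR]; linarith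
    nlinarith [Real.pi_pos]
  have hsinpos : 0 < Real.sin θ := Real.sin_pos_of_pos_of_lt_pi hθpos hθlt
  have hsinne : Real.sin θ ≠ 0 := ne_of_gt hsinpos
  -- sin(Mθ)^2 = 1/2
  have hcos0 : Real.cos (2 * ((M:ℝ) * θ)) = 0 := by
    have harg : 2 * ((M:ℝ) * θ) = ((s-1:ℕ):ℝ) * Real.pi + Real.pi/2 := by
      rw [hθ, hNR]
      have : ((s-1:ℕ):ℝ) = (s:ℝ) - 1 := by
        rw [Nat.cast_sub hs1]; norm_num
      rw [this]
      field_simp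
      ring
    rw [harg, Real.cos_add, Real.cos_pi_div_two, Real.sin_pi_div_two, Real.sin_nat_mul_pi]
    ring
  have hMθ : Real.sin ((M:ℝ) * θ)^2 = 1/2 := by
    have := Real.cos_two_mul ((M:ℝ)*θ)
    have hp := Real.sin_sq_add_cos_sq ((M:ℝ)*θ)
    rw [hcos0] at this
    nlinarith
  -- Fejer
  have hfej := fej_sum' θ (M - 1)
  have hcast : ((M-1:ℕ):ℝ) + 1 = (M:ℝ) := by
    rw [Nat.cast_sub hM1]; norm_num
  rw [hcast, hMθ] at hfej
  -- rewrite the sum in the goal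
  have hsum : ∑ k ∈ Finset.Icc 1 (N / 4 - 1),
        (4 * (k : ℝ) / N - 1) * Real.cos (2 * Real.pi * k * (2 * (s : ℝ) - 1) / N)
      = -(1/(M:ℝ)) * ∑ k ∈ Finset.Icc 1 (M-1), ((M:ℝ) - k) * Real.cos (2*k*θ) := by
    rw [hdiv, Finset.mul_sum]
    apply Finset.sum_congr rfl
    intro k hk
    have harg : 2 * Real.pi * k * (2 * (s : ℝ) - 1) / N = 2*k*θ := by
      rw [hθ]; field_simp
    rw [harg, hNR]
    have hMne : (M:ℝ) ≠ 0 := by positivity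
    field_simp
    ring
  rw [hsum]
  have hMne : (M:ℝ) ≠ 0 := by positivity
  have hs2ne : Real.sin θ ^ 2 ≠ 0 := pow_ne_zero 2 hsinne
  rw [hNR]
  field_simp
  linear_combination 4 * hfej
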